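/- Let M₁, M₂ be closed subspaces of a Hilbert space H with M₁ + M₂ closed, and let M = M₁ ∩ M₂. Then for every x ∈ H the iterates (P_{M₂}P_{M₁})ⁿ(x) converge to P_M(x) linearly with rate c(M₁,M₂)², i.e. ‖(P_{M₂}P_{M₁})ⁿ(x) − P_M(x)‖ ≤ c·αⁿ‖x‖ for some c and α = c(M₁,M₂)² < 1. -/

import Mathlib

open scoped InnerProductSpace

noncomputable def proj {𝕜 H : Type*} [RCLike 𝕜] [NormedAddCommGroup H]
    [InnerProductSpace 𝕜 H] (S : Submodule 𝕜 H) [CompleteSpace S] : H →L[𝕜] H :=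
  S.subtypeL.comp S.orthogonalProjectionOnto

noncomputable def fcos {𝕜 H : Type*} [RCLike 𝕜] [NormedAddCommGroup H]
    [InnerProductSpace 𝕜 H] (M₁ M₂ : Submodule 𝕜 H) : ℝ :=
  sSup {r : ℝ | ∃ x ∈ M₁ ⊓ (M₁ ⊓ M₂)ᗮ, ∃ y ∈ M₂ ⊓ (M₁ ⊓ M₂)ᗮ,
    ‖x‖ ≤ 1 ∧ ‖y‖ ≤ 1 ∧ r = ‖(⟪x, y⟫_𝕜 : 𝕜)‖}

section Aux

variable {𝕜 H : Type*} [RCLike 𝕜] [NormedAddCommGroup H] [InnerProductSpace 𝕜 H]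

local notation "⟪" x ", " y "⟫" => @inner 𝕜 _ _ x y

lemma proj_apply (S : Submodule 𝕜 H) [CompleteSpace S] (x : H) :
    proj S x = (S.orthogonalProjectionOnto x : H) := rfl

lemma proj_mem (S : Submodule 𝕜 H) [CompleteSpace S] (x : H) : proj S x ∈ S :=
  (S.orthogonalProjectionOnto x).2

lemma proj_eq_self (S : Submodule 𝕜 H) [CompleteSpace S] {x : H} (hx : x ∈ S) :
    proj S x = x :=
  Submodule.starProjection_eq_self_iff.2 hx

lemma proj_eq_zero (S : Submodule 𝕜 H) [CompleteSpace S] {x : H} (hx : x ∈ Sᗮ) :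
    proj S x = 0 := by
  rw [proj_apply, Submodule.orthogonalProjectionOnto_apply_of_mem_orthogonal hx,
    Submodule.coe_zero]

lemma inner_proj_left (S : Submodule 𝕜 H) [CompleteSpace S] (x y : H) :
    ⟪proj S x, y⟫ = ⟪x, proj S y⟫ :=
  Submodule.inner_starProjection_left_eq_right S x y

lemma proj_mul_self (S : Submodule 𝕜 H) [CompleteSpace S] :
    proj S * proj S = proj (𝕜 := 𝕜) S := by
  ext x
  exact proj_eq_self S (proj_mem S x)

lemma proj_mul_proj_of_le_orthogonal {S T : Submodule 𝕜 H} [CompleteSpace S] [CompleteSpace T]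
    (h : T ≤ Sᗮ) : proj S * proj T = 0 := by
  ext x
  exact proj_eq_zero S (h (proj_mem T x))

lemma proj_norm_le (S : Submodule 𝕜 H) [CompleteSpace S] (x : H) : ‖proj S x‖ ≤ ‖x‖ := by
  by_cases h : proj S x = 0
  · simp [h]
  · have h1 : ‖proj S x‖ ^ 2 = RCLike.re ⟪x, proj S x⟫ := by
      rw [← inner_self_eq_norm_sq (𝕜 := 𝕜),
        show (⟪proj S x, proj S x⟫) = ⟪x, proj S (proj S x)⟫ from inner_proj_left S x _,
        proj_eq_self S (proj_mem S x)]
    have h2 : RCLike.re ⟪x, proj S x⟫ ≤ ‖x‖ * ‖proj S x‖ :=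
      (RCLike.re_le_norm _).trans (norm_inner_le_norm _ _)
    have h3 : ‖proj S x‖ * ‖proj S x‖ ≤ ‖x‖ * ‖proj S x‖ := by
      rw [← sq]; exact h1 ▸ h2
    exact le_of_mul_le_mul_right h3 (norm_pos_iff.2 h)

lemma proj_eq_add {S T : Submodule 𝕜 H} [CompleteSpace S] [CompleteSpace T]
    [CompleteSpace (S ⊓ Tᗮ : Submodule 𝕜 H)] (h : T ≤ S) :
    proj S = proj T + proj (S ⊓ Tᗮ) := by
  ext x
  have hmem : proj T x + proj (S ⊓ Tᗮ) x ∈ S :=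
    S.add_mem (h (proj_mem T x)) (proj_mem (S ⊓ Tᗮ) x).1
  have horth : x - (proj T x + proj (S ⊓ Tᗮ) x) ∈ Sᗮ := by
    rw [Submodule.mem_orthogonal]
    intro w hw
    have hw2 : w - proj T w ∈ S ⊓ Tᗮ :=
      ⟨S.sub_mem hw (h (proj_mem T w)), Submodule.sub_starProjection_mem_orthogonal w⟩
    have e1 : ⟪proj T w, x - (proj T x + proj (S ⊓ Tᗮ) x)⟫ = 0 := by
      have a1 : ⟪proj T w, x - proj T x⟫ = 0 :=
        Submodule.inner_right_of_mem_orthogonal (proj_mem T w)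
          (Submodule.sub_starProjection_mem_orthogonal x)
      have a2 : ⟪proj T w, proj (S ⊓ Tᗮ) x⟫ = 0 :=
        Submodule.inner_right_of_mem_orthogonal (proj_mem T w)
          (proj_mem (S ⊓ Tᗮ) x).2
      have : x - (proj T x + proj (S ⊓ Tᗮ) x) = (x - proj T x) - proj (S ⊓ Tᗮ) x := by abel
      rw [this, inner_sub_right, a1, a2, sub_zero]
    have e2 : ⟪w - proj T w, x - (proj T x + proj (S ⊓ Tᗮ) x)⟫ = 0 := by
      have a1 : ⟪w - proj T w, x - proj (S ⊓ Tᗮ) x⟫ = 0 :=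
        Submodule.inner_right_of_mem_orthogonal hw2
          (Submodule.sub_starProjection_mem_orthogonal x)
      have a2 : ⟪w - proj T w, proj T x⟫ = 0 :=
        Submodule.inner_left_of_mem_orthogonal (proj_mem T x)
          (Submodule.sub_starProjection_mem_orthogonal w)
      have : x - (proj T x + proj (S ⊓ Tᗮ) x) = (x - proj (S ⊓ Tᗮ) x) - proj T x := by abel
      rw [this, inner_sub_right, a1, a2, sub_zero]
    have hwdec : w = proj T w + (w - proj T w) := by abel
    rw [hwdec, inner_add_left, e1, e2, add_zero]
  have := (Submodule.eq_starProjection_of_mem_orthogonal (K := S) hmem horth : proj S x = _)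
  simpa [proj_apply, ContinuousLinearMap.add_apply] using this

end Aux

section Aux2

variable {𝕜 H : Type*} [RCLike 𝕜] [NormedAddCommGroup H] [InnerProductSpace 𝕜 H]
  [CompleteSpace H]

local notation "⟪" x ", " y "⟫" => @inner 𝕜 _ _ x y

lemma sandwich_pow_norm {E F : H →L[𝕜] H} (hE : IsSelfAdjoint E) (hF : IsSelfAdjoint F)
    (hEE : E * E = E) (hFF : F * F = F) (n : ℕ) (x : H) :
    ‖((F * E) ^ (n + 1)) x‖ ≤ ‖F * E‖ ^ (2 * n + 1) * ‖x‖ := by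
  set G := F * E with hG
  set T := E * F * E with hT
  have hstar : star G = E * F := by
    rw [hG, star_mul, hE.star_eq, hF.star_eq]
  have hTG : star G * G = T := by
    rw [hstar, hG, hT, show E * F * (F * E) = E * (F * F) * E by noncomm_ring, hFF]
  have hET1 : E * T = T := by
    rw [hT, show E * (E * F * E) = (E * E) * F * E by noncomm_ring, hEE]
  have hTE1 : T * E = T := by
    rw [hT, show E * F * E * E = E * F * (E * E) by noncomm_ring, hEE]
  have hET : ∀ k : ℕ, E * T ^ (k + 1) = T ^ (k + 1) := by
    intro k
    rw [pow_succ', ← mul_assoc, hET1]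
  have hTE : ∀ k : ℕ, T ^ (k + 1) * E = T ^ (k + 1) := by
    intro k
    rw [pow_succ, mul_assoc, hTE1]
  have hkey : ∀ m : ℕ, (star G) ^ (m + 1) * G ^ (m + 1) = T ^ (2 * m + 1) := by
    intro m
    induction m with
    | zero => simpa [pow_one] using hTG
    | succ m ih =>
      have h23 : 2 * (m + 1) + 1 = 2 * m + 1 + 2 := by ring
      rw [h23]
      calc (star G) ^ (m + 1 + 1) * G ^ (m + 1 + 1)
          = star G * (((star G) ^ (m + 1) * G ^ (m + 1)) * G) := by
            rw [pow_succ' (star G) (m + 1), pow_succ G (m + 1)]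
            simp only [mul_assoc]
        _ = star G * (T ^ (2 * m + 1) * G) := by rw [ih]
        _ = (E * F) * ((E * (T ^ (2 * m + 1) * E)) * (F * E)) := by
            rw [hstar, hG, hTE, hET]
        _ = (E * F * E) * (T ^ (2 * m + 1) * (E * F * E)) := by simp only [mul_assoc]
        _ = T * (T ^ (2 * m + 1) * T) := by rw [← hT]
        _ = T ^ (2 * m + 1 + 2) := by
            rw [show 2 * m + 1 + 2 = 1 + (2 * m + 1) + 1 from by ring,
              pow_succ T (1 + (2 * m + 1)), pow_add T 1 (2 * m + 1), pow_one,
              mul_assoc T (T ^ (2 * m + 1)) T]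
  have hinner : ⟪(G ^ (n + 1)) x, (G ^ (n + 1)) x⟫ = ⟪(T ^ (2 * n + 1)) x, x⟫ := by
    have hadj : (star G) ^ (n + 1) = ContinuousLinearMap.adjoint (G ^ (n + 1)) := by
      rw [← star_pow, ContinuousLinearMap.star_eq_adjoint]
    rw [← hkey n, ContinuousLinearMap.mul_apply, hadj,
      ContinuousLinearMap.adjoint_inner_left]
  have hTnorm : ‖T‖ ≤ ‖G‖ ^ 2 := by
    rw [← hTG, show star G * G = ContinuousLinearMap.adjoint G ∘L G from rfl,
      ContinuousLinearMap.norm_adjoint_comp_self, sq]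
  have hsq : ‖(G ^ (n + 1)) x‖ ^ 2 ≤ (‖G‖ ^ (2 * n + 1) * ‖x‖) ^ 2 := by
    calc ‖(G ^ (n + 1)) x‖ ^ 2
        = RCLike.re ⟪(G ^ (n + 1)) x, (G ^ (n + 1)) x⟫ := (inner_self_eq_norm_sq _).symm
      _ = RCLike.re ⟪(T ^ (2 * n + 1)) x, x⟫ := by rw [hinner]
      _ ≤ ‖(⟪(T ^ (2 * n + 1)) x, x⟫ : 𝕜)‖ := RCLike.re_le_norm _
      _ ≤ ‖(T ^ (2 * n + 1)) x‖ * ‖x‖ := norm_inner_le_norm _ _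
      _ ≤ (‖T ^ (2 * n + 1)‖ * ‖x‖) * ‖x‖ :=
          mul_le_mul_of_nonneg_right ((T ^ (2 * n + 1)).le_opNorm x) (norm_nonneg x)
      _ ≤ ((‖T‖ ^ (2 * n + 1)) * ‖x‖) * ‖x‖ :=
          mul_le_mul_of_nonneg_right (mul_le_mul_of_nonneg_right
            (norm_pow_le' T (Nat.succ_pos (2 * n))) (norm_nonneg x)) (norm_nonneg x)
      _ ≤ (((‖G‖ ^ 2) ^ (2 * n + 1)) * ‖x‖) * ‖x‖ :=
          mul_le_mul_of_nonneg_right (mul_le_mul_of_nonneg_right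
            (pow_le_pow_left₀ (norm_nonneg T) hTnorm _) (norm_nonneg x)) (norm_nonneg x)
      _ = (‖G‖ ^ (2 * n + 1) * ‖x‖) ^ 2 := by ring
  have h1 : (0:ℝ) ≤ ‖G‖ ^ (2 * n + 1) * ‖x‖ := by positivity
  calc ‖(G ^ (n + 1)) x‖ = √(‖(G ^ (n + 1)) x‖ ^ 2) := (Real.sqrt_sq (norm_nonneg _)).symm
    _ ≤ √((‖G‖ ^ (2 * n + 1) * ‖x‖) ^ 2) := Real.sqrt_le_sqrt hsq
    _ = ‖G‖ ^ (2 * n + 1) * ‖x‖ := Real.sqrt_sq h1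

lemma submodule_isClosed_of_complete {S : Submodule 𝕜 H} (h : CompleteSpace S) :
    IsClosed (S : Set H) :=
  (completeSpace_coe_iff_isComplete.mp h).isClosed

lemma submodule_completeSpace_of_isClosed {S : Submodule 𝕜 H} (h : IsClosed (S : Set H)) :
    CompleteSpace S :=
  completeSpace_coe_iff_isComplete.mpr h.isComplete

def fcset (M₁ M₂ : Submodule 𝕜 H) : Set ℝ :=
  {r : ℝ | ∃ x ∈ M₁ ⊓ (M₁ ⊓ M₂)ᗮ, ∃ y ∈ M₂ ⊓ (M₁ ⊓ M₂)ᗮ,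
    ‖x‖ ≤ 1 ∧ ‖y‖ ≤ 1 ∧ r = ‖(⟪x, y⟫ : 𝕜)‖}

lemma fcos_eq_sSup (M₁ M₂ : Submodule 𝕜 H) : fcos M₁ M₂ = sSup (fcset M₁ M₂) := rfl

lemma fcset_le_one (M₁ M₂ : Submodule 𝕜 H) : ∀ r ∈ fcset M₁ M₂, r ≤ 1 := by
  rintro r ⟨x, hx, y, hy, hx1, hy1, rfl⟩
  refine (norm_inner_le_norm x y).trans ?_
  calc ‖x‖ * ‖y‖ ≤ 1 * 1 :=
        mul_le_mul hx1 hy1 (norm_nonneg y) zero_le_one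
    _ = 1 := one_mul 1

lemma bddAbove_fcset (M₁ M₂ : Submodule 𝕜 H) : BddAbove (fcset M₁ M₂) :=
  ⟨1, fun r hr => fcset_le_one M₁ M₂ r hr⟩

lemma zero_mem_fcset (M₁ M₂ : Submodule 𝕜 H) : (0 : ℝ) ∈ fcset M₁ M₂ :=
  ⟨0, Submodule.zero_mem _, 0, Submodule.zero_mem _, by simp, by simp, by simp⟩

lemma fcos_nonneg (M₁ M₂ : Submodule 𝕜 H) : 0 ≤ fcos M₁ M₂ :=
  le_csSup (bddAbove_fcset M₁ M₂) (zero_mem_fcset M₁ M₂)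

lemma norm_inner_le_fcos (M₁ M₂ : Submodule 𝕜 H) {x y : H}
    (hx : x ∈ M₁ ⊓ (M₁ ⊓ M₂)ᗮ) (hy : y ∈ M₂ ⊓ (M₁ ⊓ M₂)ᗮ)
    (hx1 : ‖x‖ ≤ 1) (hy1 : ‖y‖ ≤ 1) : ‖(⟪x, y⟫ : 𝕜)‖ ≤ fcos M₁ M₂ :=
  le_csSup (bddAbove_fcset M₁ M₂) ⟨x, hx, y, hy, hx1, hy1, rfl⟩

lemma norm_inner_smul_inv (x y : H) :
    ‖(⟪((‖x‖⁻¹ : ℝ) : 𝕜) • x, ((‖y‖⁻¹ : ℝ) : 𝕜) • y⟫ : 𝕜)‖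
      = ‖x‖⁻¹ * (‖y‖⁻¹ * ‖(⟪x, y⟫ : 𝕜)‖) := by
  rw [inner_smul_left, inner_smul_right, norm_mul, norm_mul, RCLike.norm_conj,
    RCLike.norm_ofReal, RCLike.norm_ofReal,
    abs_of_nonneg (inv_nonneg.2 (norm_nonneg x)),
    abs_of_nonneg (inv_nonneg.2 (norm_nonneg y))]

lemma norm_inv_smul' {x : H} (hx : x ≠ 0) : ‖((‖x‖⁻¹ : ℝ) : 𝕜) • x‖ = 1 := by
  rw [norm_smul, RCLike.norm_ofReal, abs_of_nonneg (inv_nonneg.2 (norm_nonneg x)),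
    inv_mul_cancel₀ (norm_ne_zero_iff.2 hx)]

lemma opnorm_le_fcos (M₁ M₂ : Submodule 𝕜 H)
    [CompleteSpace (M₁ ⊓ (M₁ ⊓ M₂)ᗮ : Submodule 𝕜 H)]
    [CompleteSpace (M₂ ⊓ (M₁ ⊓ M₂)ᗮ : Submodule 𝕜 H)] :
    ‖proj (M₂ ⊓ (M₁ ⊓ M₂)ᗮ) * proj (M₁ ⊓ (M₁ ⊓ M₂)ᗮ)‖ ≤ fcos M₁ M₂ := by
  refine ContinuousLinearMap.opNorm_le_bound _ (fcos_nonneg M₁ M₂) fun x => ?_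
  rw [ContinuousLinearMap.mul_apply]
  by_cases hg : proj (M₂ ⊓ (M₁ ⊓ M₂)ᗮ) (proj (M₁ ⊓ (M₁ ⊓ M₂)ᗮ) x) = 0
  · rw [hg, norm_zero]; exact mul_nonneg (fcos_nonneg M₁ M₂) (norm_nonneg x)
  have hune : proj (M₁ ⊓ (M₁ ⊓ M₂)ᗮ) x ≠ 0 := by
    intro h; apply hg; rw [h, map_zero]
  have hgpos : (0 : ℝ) < ‖proj (M₂ ⊓ (M₁ ⊓ M₂)ᗮ) (proj (M₁ ⊓ (M₁ ⊓ M₂)ᗮ) x)‖ :=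
    norm_pos_iff.2 hg
  have hupos : (0 : ℝ) < ‖proj (M₁ ⊓ (M₁ ⊓ M₂)ᗮ) x‖ := norm_pos_iff.2 hune
  have h1 : ‖proj (M₂ ⊓ (M₁ ⊓ M₂)ᗮ) (proj (M₁ ⊓ (M₁ ⊓ M₂)ᗮ) x)‖ ^ 2
      = RCLike.re (⟪proj (M₁ ⊓ (M₁ ⊓ M₂)ᗮ) x,
          proj (M₂ ⊓ (M₁ ⊓ M₂)ᗮ) (proj (M₁ ⊓ (M₁ ⊓ M₂)ᗮ) x)⟫ : 𝕜) := by
    rw [← inner_self_eq_norm_sq (𝕜 := 𝕜),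
      show (⟪proj (M₂ ⊓ (M₁ ⊓ M₂)ᗮ) (proj (M₁ ⊓ (M₁ ⊓ M₂)ᗮ) x),
          proj (M₂ ⊓ (M₁ ⊓ M₂)ᗮ) (proj (M₁ ⊓ (M₁ ⊓ M₂)ᗮ) x)⟫ : 𝕜)
        = ⟪proj (M₁ ⊓ (M₁ ⊓ M₂)ᗮ) x, proj (M₂ ⊓ (M₁ ⊓ M₂)ᗮ)
            (proj (M₂ ⊓ (M₁ ⊓ M₂)ᗮ) (proj (M₁ ⊓ (M₁ ⊓ M₂)ᗮ) x))⟫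
        from inner_proj_left _ _ _,
      proj_eq_self _ (proj_mem _ _)]
  have hle : ‖(⟪proj (M₁ ⊓ (M₁ ⊓ M₂)ᗮ) x,
      proj (M₂ ⊓ (M₁ ⊓ M₂)ᗮ) (proj (M₁ ⊓ (M₁ ⊓ M₂)ᗮ) x)⟫ : 𝕜)‖
      ≤ fcos M₁ M₂ * (‖proj (M₁ ⊓ (M₁ ⊓ M₂)ᗮ) x‖
        * ‖proj (M₂ ⊓ (M₁ ⊓ M₂)ᗮ) (proj (M₁ ⊓ (M₁ ⊓ M₂)ᗮ) x)‖) := by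
    have hmem1 : ((‖proj (M₁ ⊓ (M₁ ⊓ M₂)ᗮ) x‖⁻¹ : ℝ) : 𝕜) • proj (M₁ ⊓ (M₁ ⊓ M₂)ᗮ) x
        ∈ M₁ ⊓ (M₁ ⊓ M₂)ᗮ := Submodule.smul_mem _ _ (proj_mem _ x)
    have hmem2 : ((‖proj (M₂ ⊓ (M₁ ⊓ M₂)ᗮ) (proj (M₁ ⊓ (M₁ ⊓ M₂)ᗮ) x)‖⁻¹ : ℝ) : 𝕜)
        • proj (M₂ ⊓ (M₁ ⊓ M₂)ᗮ) (proj (M₁ ⊓ (M₁ ⊓ M₂)ᗮ) x)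
        ∈ M₂ ⊓ (M₁ ⊓ M₂)ᗮ := Submodule.smul_mem _ _ (proj_mem _ _)
    have key := norm_inner_le_fcos M₁ M₂ hmem1 hmem2
      (le_of_eq (norm_inv_smul' hune)) (le_of_eq (norm_inv_smul' hg))
    rw [norm_inner_smul_inv] at key
    calc ‖(⟪proj (M₁ ⊓ (M₁ ⊓ M₂)ᗮ) x,
          proj (M₂ ⊓ (M₁ ⊓ M₂)ᗮ) (proj (M₁ ⊓ (M₁ ⊓ M₂)ᗮ) x)⟫ : 𝕜)‖
        = (‖proj (M₁ ⊓ (M₁ ⊓ M₂)ᗮ) x‖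
            * ‖proj (M₂ ⊓ (M₁ ⊓ M₂)ᗮ) (proj (M₁ ⊓ (M₁ ⊓ M₂)ᗮ) x)‖)
          * (‖proj (M₁ ⊓ (M₁ ⊓ M₂)ᗮ) x‖⁻¹
            * (‖proj (M₂ ⊓ (M₁ ⊓ M₂)ᗮ) (proj (M₁ ⊓ (M₁ ⊓ M₂)ᗮ) x)‖⁻¹
              * ‖(⟪proj (M₁ ⊓ (M₁ ⊓ M₂)ᗮ) x,
                  proj (M₂ ⊓ (M₁ ⊓ M₂)ᗮ) (proj (M₁ ⊓ (M₁ ⊓ M₂)ᗮ) x)⟫ : 𝕜)‖)) := by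
          field_simp
      _ ≤ (‖proj (M₁ ⊓ (M₁ ⊓ M₂)ᗮ) x‖
            * ‖proj (M₂ ⊓ (M₁ ⊓ M₂)ᗮ) (proj (M₁ ⊓ (M₁ ⊓ M₂)ᗮ) x)‖) * fcos M₁ M₂ :=
          mul_le_mul_of_nonneg_left key (by positivity)
      _ = fcos M₁ M₂ * (‖proj (M₁ ⊓ (M₁ ⊓ M₂)ᗮ) x‖
            * ‖proj (M₂ ⊓ (M₁ ⊓ M₂)ᗮ) (proj (M₁ ⊓ (M₁ ⊓ M₂)ᗮ) x)‖) := by ring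
  have h2 : ‖proj (M₂ ⊓ (M₁ ⊓ M₂)ᗮ) (proj (M₁ ⊓ (M₁ ⊓ M₂)ᗮ) x)‖ ^ 2
      ≤ fcos M₁ M₂ * (‖proj (M₁ ⊓ (M₁ ⊓ M₂)ᗮ) x‖
        * ‖proj (M₂ ⊓ (M₁ ⊓ M₂)ᗮ) (proj (M₁ ⊓ (M₁ ⊓ M₂)ᗮ) x)‖) := by
    rw [h1]; exact (RCLike.re_le_norm _).trans hle
  have hule : ‖proj (M₁ ⊓ (M₁ ⊓ M₂)ᗮ) x‖ ≤ ‖x‖ := proj_norm_le _ x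
  have h3 : ‖proj (M₂ ⊓ (M₁ ⊓ M₂)ᗮ) (proj (M₁ ⊓ (M₁ ⊓ M₂)ᗮ) x)‖
      * ‖proj (M₂ ⊓ (M₁ ⊓ M₂)ᗮ) (proj (M₁ ⊓ (M₁ ⊓ M₂)ᗮ) x)‖
      ≤ (fcos M₁ M₂ * ‖x‖) * ‖proj (M₂ ⊓ (M₁ ⊓ M₂)ᗮ) (proj (M₁ ⊓ (M₁ ⊓ M₂)ᗮ) x)‖ := by
    rw [← sq]
    refine h2.trans ?_
    calc fcos M₁ M₂ * (‖proj (M₁ ⊓ (M₁ ⊓ M₂)ᗮ) x‖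
          * ‖proj (M₂ ⊓ (M₁ ⊓ M₂)ᗮ) (proj (M₁ ⊓ (M₁ ⊓ M₂)ᗮ) x)‖)
        ≤ fcos M₁ M₂ * (‖x‖ * ‖proj (M₂ ⊓ (M₁ ⊓ M₂)ᗮ) (proj (M₁ ⊓ (M₁ ⊓ M₂)ᗮ) x)‖) :=
          mul_le_mul_of_nonneg_left
            (mul_le_mul_of_nonneg_right hule (norm_nonneg _)) (fcos_nonneg M₁ M₂)
      _ = (fcos M₁ M₂ * ‖x‖) * ‖proj (M₂ ⊓ (M₁ ⊓ M₂)ᗮ) (proj (M₁ ⊓ (M₁ ⊓ M₂)ᗮ) x)‖ := by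
          ring
  exact le_of_mul_le_mul_right h3 hgpos

lemma sup_inf_orthogonal (M₁ M₂ : Submodule 𝕜 H) [CompleteSpace (M₁ ⊓ M₂ : Submodule 𝕜 H)] :
    (M₁ ⊓ (M₁ ⊓ M₂)ᗮ) ⊔ (M₂ ⊓ (M₁ ⊓ M₂)ᗮ) = (M₁ ⊔ M₂) ⊓ (M₁ ⊓ M₂)ᗮ := by
  apply le_antisymm
  · refine sup_le ?_ ?_
    · exact le_inf (inf_le_left.trans le_sup_left) inf_le_right
    · exact le_inf (inf_le_left.trans le_sup_right) inf_le_right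
  · rintro z ⟨hz12, hzo⟩
    obtain ⟨a, ha, b, hb, rfl⟩ := Submodule.mem_sup.1 hz12
    have ha' : a - proj (M₁ ⊓ M₂) a ∈ M₁ ⊓ (M₁ ⊓ M₂)ᗮ :=
      ⟨M₁.sub_mem ha ((inf_le_left : M₁ ⊓ M₂ ≤ M₁) (proj_mem (M₁ ⊓ M₂) a)),
        Submodule.sub_starProjection_mem_orthogonal a⟩
    have hb' : b - proj (M₁ ⊓ M₂) b ∈ M₂ ⊓ (M₁ ⊓ M₂)ᗮ :=
      ⟨M₂.sub_mem hb ((inf_le_right : M₁ ⊓ M₂ ≤ M₂) (proj_mem (M₁ ⊓ M₂) b)),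
        Submodule.sub_starProjection_mem_orthogonal b⟩
    have hzero : proj (M₁ ⊓ M₂) a + proj (M₁ ⊓ M₂) b = 0 := by
      have h1 : proj (M₁ ⊓ M₂) (a + b) = 0 := proj_eq_zero _ hzo
      rw [map_add] at h1
      exact h1
    have hz : a + b = (a - proj (M₁ ⊓ M₂) a) + (b - proj (M₁ ⊓ M₂) b) := by
      rw [sub_add_sub_comm, hzero, sub_zero]
    rw [hz]
    exact Submodule.mem_sup.2 ⟨_, ha', _, hb', rfl⟩

lemma fcos_lt_one (M₁ M₂ : Submodule 𝕜 H)
    [CompleteSpace M₁] [CompleteSpace M₂] [CompleteSpace (M₁ ⊓ M₂ : Submodule 𝕜 H)]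
    (hsum : IsClosed ((M₁ ⊔ M₂ : Submodule 𝕜 H) : Set H)) : fcos M₁ M₂ < 1 := by
  have hoc : IsClosed (((M₁ ⊓ M₂)ᗮ : Submodule 𝕜 H) : Set H) :=
    Submodule.isClosed_orthogonal _
  have hN₁closed : IsClosed ((M₁ ⊓ (M₁ ⊓ M₂)ᗮ : Submodule 𝕜 H) : Set H) := by
    rw [Submodule.coe_inf]
    exact (submodule_isClosed_of_complete ‹_›).inter hoc
  have hN₂closed : IsClosed ((M₂ ⊓ (M₁ ⊓ M₂)ᗮ : Submodule 𝕜 H) : Set H) := by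
    rw [Submodule.coe_inf]
    exact (submodule_isClosed_of_complete ‹_›).inter hoc
  have hWclosed : IsClosed
      (((M₁ ⊓ (M₁ ⊓ M₂)ᗮ) ⊔ (M₂ ⊓ (M₁ ⊓ M₂)ᗮ) : Submodule 𝕜 H) : Set H) := by
    rw [sup_inf_orthogonal M₁ M₂, Submodule.coe_inf]
    exact hsum.inter hoc
  haveI : CompleteSpace (M₁ ⊓ (M₁ ⊓ M₂)ᗮ : Submodule 𝕜 H) :=
    submodule_completeSpace_of_isClosed hN₁closed
  haveI : CompleteSpace (M₂ ⊓ (M₁ ⊓ M₂)ᗮ : Submodule 𝕜 H) :=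
    submodule_completeSpace_of_isClosed hN₂closed
  haveI : CompleteSpace ((M₁ ⊓ (M₁ ⊓ M₂)ᗮ) ⊔ (M₂ ⊓ (M₁ ⊓ M₂)ᗮ) : Submodule 𝕜 H) :=
    submodule_completeSpace_of_isClosed hWclosed
  -- the sum map
  set N₁ : Submodule 𝕜 H := M₁ ⊓ (M₁ ⊓ M₂)ᗮ with hN₁
  set N₂ : Submodule 𝕜 H := M₂ ⊓ (M₁ ⊓ M₂)ᗮ with hN₂
  have hbot : N₁ ⊓ N₂ = ⊥ := by
    apply le_antisymm _ bot_le
    intro z hz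
    have hzM : z ∈ (M₁ ⊓ M₂) ⊓ (M₁ ⊓ M₂)ᗮ := ⟨⟨hz.1.1, hz.2.1⟩, hz.1.2⟩
    rwa [(Submodule.orthogonal_disjoint (M₁ ⊓ M₂)).eq_bot] at hzM
  let T0 : (N₁ × N₂) →ₗ[𝕜] (N₁ ⊔ N₂ : Submodule 𝕜 H) :=
    (Submodule.inclusion le_sup_left).coprod (Submodule.inclusion le_sup_right)
  have hT0coe : ∀ p : N₁ × N₂, ((T0 p : H)) = (p.1 : H) + (p.2 : H) := fun p => rfl
  have hT0bound : ∀ p : N₁ × N₂, ‖T0 p‖ ≤ 2 * ‖p‖ := by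
    intro p
    have : ‖T0 p‖ = ‖(p.1 : H) + (p.2 : H)‖ := by rw [← hT0coe p]; rfl
    rw [this, Prod.norm_def]
    calc ‖(p.1 : H) + (p.2 : H)‖ ≤ ‖(p.1 : H)‖ + ‖(p.2 : H)‖ := norm_add_le _ _
      _ ≤ max ‖p.1‖ ‖p.2‖ + max ‖p.1‖ ‖p.2‖ := add_le_add (le_max_left _ _) (le_max_right _ _)
      _ = 2 * max ‖p.1‖ ‖p.2‖ := by ring
  let Tc : (N₁ × N₂) →L[𝕜] (N₁ ⊔ N₂ : Submodule 𝕜 H) := T0.mkContinuous 2 hT0bound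
  have hTccoe : ∀ p : N₁ × N₂, ((Tc p : H)) = (p.1 : H) + (p.2 : H) := fun p => rfl
  have hker : Tc.ker = ⊥ := by
    rw [LinearMap.ker_eq_bot']
    intro p hp
    have h0 : (p.1 : H) + (p.2 : H) = 0 := by
      rw [← hTccoe p]; exact congrArg Subtype.val hp
    have h1 : (p.1 : H) ∈ N₁ ⊓ N₂ :=
      ⟨p.1.2, by rw [eq_neg_of_add_eq_zero_left h0]; exact N₂.neg_mem p.2.2⟩
    rw [hbot] at h1
    have hp1 : (p.1 : H) = 0 := h1
    have hp2 : (p.2 : H) = 0 := by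
      have := eq_neg_of_add_eq_zero_right h0
      rw [this, hp1, neg_zero]
    exact Prod.ext (Subtype.ext hp1) (Subtype.ext hp2)
  have hrange : Tc.range = ⊤ := by
    rw [LinearMap.range_eq_top]
    rintro ⟨w, hw⟩
    obtain ⟨a, ha, b, hb, hab⟩ := Submodule.mem_sup.1 hw
    exact ⟨(⟨a, ha⟩, ⟨b, hb⟩), Subtype.ext ((hTccoe _).trans hab)⟩
  let e := ContinuousLinearEquiv.ofBijective Tc hker hrange
  set C : ℝ := ‖(e.symm : (N₁ ⊔ N₂ : Submodule 𝕜 H) →L[𝕜] (N₁ × N₂))‖ with hC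
  have hCpos : (0 : ℝ) < C + 1 := by positivity
  have hkey : ∀ (u v : H), u ∈ N₁ → v ∈ N₂ →
      max ‖u‖ ‖v‖ ≤ (C + 1) * ‖u + v‖ := by
    intro u v hu hv
    set p : N₁ × N₂ := (⟨u, hu⟩, ⟨v, hv⟩) with hp
    have h1 : e.symm (Tc p) = p := ContinuousLinearEquiv.ofBijective_symm_apply_apply _ _ _ p
    have h2 : ‖p‖ ≤ C * ‖Tc p‖ := by
      calc ‖p‖ = ‖(e.symm : (N₁ ⊔ N₂ : Submodule 𝕜 H) →L[𝕜] (N₁ × N₂)) (Tc p)‖ := by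
            rw [ContinuousLinearEquiv.coe_coe, h1]
        _ ≤ C * ‖Tc p‖ := ContinuousLinearMap.le_opNorm _ _
    have h3 : ‖Tc p‖ = ‖u + v‖ := by rw [show ‖Tc p‖ = ‖(Tc p : H)‖ from rfl, hTccoe]
    have h4 : ‖p‖ = max ‖u‖ ‖v‖ := by rw [Prod.norm_def]; rfl
    calc max ‖u‖ ‖v‖ = ‖p‖ := h4.symm
      _ ≤ C * ‖u + v‖ := by rw [← h3]; exact h2
      _ ≤ (C + 1) * ‖u + v‖ :=
          mul_le_mul_of_nonneg_right (by linarith) (norm_nonneg _)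
  set β : ℝ := 1 - (2 * (C + 1) ^ 2)⁻¹ with hβ
  have hden : (0 : ℝ) < 2 * (C + 1) ^ 2 := by positivity
  have hC0 : (0 : ℝ) ≤ C := hC ▸ norm_nonneg _
  have hβ0 : (0 : ℝ) ≤ β := by
    have h1 : (1 : ℝ) ≤ (C + 1) ^ 2 := by nlinarith
    have h2 : (2 * (C + 1) ^ 2)⁻¹ ≤ 2⁻¹ := by
      apply inv_anti₀
      · norm_num
      · nlinarith
    rw [hβ]; linarith
  have hβ1 : β < 1 := by
    rw [hβ]
    have : (0 : ℝ) < (2 * (C + 1) ^ 2)⁻¹ := inv_pos.2 hden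
    linarith
  have hunit : ∀ u v : H, u ∈ N₁ → v ∈ N₂ → ‖u‖ = 1 → ‖v‖ = 1 →
      ‖(⟪u, v⟫ : 𝕜)‖ ≤ β := by
    intro u v hu hv hu1 hv1
    by_cases ht : (⟪u, v⟫ : 𝕜) = 0
    · rw [ht, norm_zero]; exact hβ0
    have htn : ‖(⟪u, v⟫ : 𝕜)‖ ≠ 0 := norm_ne_zero_iff.2 ht
    set θ : 𝕜 := (⟪u, v⟫ : 𝕜) / ((‖(⟪u, v⟫ : 𝕜)‖ : ℝ) : 𝕜) with hθdef
    have hθ : ‖θ‖ = 1 := by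
      rw [hθdef, norm_div, RCLike.norm_ofReal, abs_of_nonneg (norm_nonneg _)]
      exact div_self htn
    have hu' : θ • u ∈ N₁ := N₁.smul_mem θ hu
    have hu'1 : ‖θ • u‖ = 1 := by rw [norm_smul, hθ, hu1, one_mul]
    have hinner : (⟪θ • u, v⟫ : 𝕜) = ((‖(⟪u, v⟫ : 𝕜)‖ : ℝ) : 𝕜) := by
      rw [inner_smul_left, hθdef, map_div₀, RCLike.conj_ofReal, div_mul_eq_mul_div,
        RCLike.conj_mul, sq, mul_div_assoc,
        div_self (RCLike.ofReal_ne_zero.2 htn), mul_one]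
    have key := hkey (θ • u) (-v) hu' (N₂.neg_mem hv)
    rw [hu'1, norm_neg, hv1, max_self, ← sub_eq_add_neg] at key
    have hdist : (C + 1)⁻¹ ≤ ‖θ • u - v‖ := by
      rw [inv_eq_one_div, div_le_iff₀ hCpos]
      linarith [key, mul_comm (C + 1) ‖θ • u - v‖]
    have hns : ‖θ • u - v‖ ^ 2 = 2 - 2 * ‖(⟪u, v⟫ : 𝕜)‖ := by
      rw [@norm_sub_sq 𝕜, hu'1, hv1, hinner, RCLike.ofReal_re]
      ring
    have h2 : ((C + 1)⁻¹) ^ 2 ≤ 2 - 2 * ‖(⟪u, v⟫ : 𝕜)‖ := by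
      rw [← hns]
      exact pow_le_pow_left₀ (inv_nonneg.2 hCpos.le) hdist 2
    have heq : (2 * (C + 1) ^ 2)⁻¹ = ((C + 1)⁻¹) ^ 2 / 2 := by
      field_simp
    rw [hβ, heq]
    linarith
  have hbound : ∀ r ∈ fcset M₁ M₂, r ≤ β := by
    rintro r ⟨x, hx, y, hy, hx1, hy1, rfl⟩
    by_cases h0 : (⟪x, y⟫ : 𝕜) = 0
    · rw [h0, norm_zero]; exact hβ0
    have hxne : x ≠ 0 := by rintro rfl; rw [inner_zero_left] at h0; exact h0 rfl
    have hyne : y ≠ 0 := by rintro rfl; rw [inner_zero_right] at h0; exact h0 rfl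
    have hx' : ((‖x‖⁻¹ : ℝ) : 𝕜) • x ∈ N₁ := N₁.smul_mem _ hx
    have hy' : ((‖y‖⁻¹ : ℝ) : 𝕜) • y ∈ N₂ := N₂.smul_mem _ hy
    have hun := hunit _ _ hx' hy' (norm_inv_smul' hxne) (norm_inv_smul' hyne)
    rw [norm_inner_smul_inv] at hun
    calc ‖(⟪x, y⟫ : 𝕜)‖
        = (‖x‖ * ‖y‖) * (‖x‖⁻¹ * (‖y‖⁻¹ * ‖(⟪x, y⟫ : 𝕜)‖)) := by
          have hX : ‖x‖ * ‖y‖ ≠ 0 :=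
            mul_ne_zero (norm_ne_zero_iff.2 hxne) (norm_ne_zero_iff.2 hyne)
          field_simp
      _ ≤ (1 : ℝ) * β := by
          apply mul_le_mul _ hun (by positivity) zero_le_one
          calc ‖x‖ * ‖y‖ ≤ 1 * 1 := mul_le_mul hx1 hy1 (norm_nonneg y) zero_le_one
            _ = 1 := one_mul 1
      _ = β := one_mul β
  calc fcos M₁ M₂ ≤ β := Real.sSup_le hbound hβ0
    _ < 1 := hβ1

lemma proj_isSelfAdjoint (S : Submodule 𝕜 H) [CompleteSpace S] : IsSelfAdjoint (proj S) :=
  isSelfAdjoint_starProjection S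

lemma proj_pow_identity (M₁ M₂ : Submodule 𝕜 H)
    [CompleteSpace M₁] [CompleteSpace M₂] [CompleteSpace (M₁ ⊓ M₂ : Submodule 𝕜 H)]
    [CompleteSpace (M₁ ⊓ (M₁ ⊓ M₂)ᗮ : Submodule 𝕜 H)]
    [CompleteSpace (M₂ ⊓ (M₁ ⊓ M₂)ᗮ : Submodule 𝕜 H)] (n : ℕ) :
    (proj M₂ * proj M₁) ^ (n + 1)
      = proj (M₁ ⊓ M₂) + (proj (M₂ ⊓ (M₁ ⊓ M₂)ᗮ) * proj (M₁ ⊓ (M₁ ⊓ M₂)ᗮ)) ^ (n + 1) := by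
  have hPE : proj (M₁ ⊓ M₂) * proj (M₁ ⊓ (M₁ ⊓ M₂)ᗮ) = 0 :=
    proj_mul_proj_of_le_orthogonal inf_le_right
  have hPF : proj (M₁ ⊓ M₂) * proj (M₂ ⊓ (M₁ ⊓ M₂)ᗮ) = 0 :=
    proj_mul_proj_of_le_orthogonal inf_le_right
  have hEP : proj (M₁ ⊓ (M₁ ⊓ M₂)ᗮ) * proj (M₁ ⊓ M₂) = 0 :=
    proj_mul_proj_of_le_orthogonal
      ((Submodule.le_orthogonal_orthogonal (M₁ ⊓ M₂)).trans
        (Submodule.orthogonal_le inf_le_right))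
  have hFP : proj (M₂ ⊓ (M₁ ⊓ M₂)ᗮ) * proj (M₁ ⊓ M₂) = 0 :=
    proj_mul_proj_of_le_orthogonal
      ((Submodule.le_orthogonal_orthogonal (M₁ ⊓ M₂)).trans
        (Submodule.orthogonal_le inf_le_right))
  have hQ1 : proj M₂ * proj M₁
      = proj (M₁ ⊓ M₂) + proj (M₂ ⊓ (M₁ ⊓ M₂)ᗮ) * proj (M₁ ⊓ (M₁ ⊓ M₂)ᗮ) := by
    rw [proj_eq_add (inf_le_left : M₁ ⊓ M₂ ≤ M₁),
      proj_eq_add (inf_le_right : M₁ ⊓ M₂ ≤ M₂), add_mul, mul_add, mul_add,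
      proj_mul_self, hPE, hFP, add_zero, zero_add]
  have hPG : proj (M₁ ⊓ M₂)
      * (proj (M₂ ⊓ (M₁ ⊓ M₂)ᗮ) * proj (M₁ ⊓ (M₁ ⊓ M₂)ᗮ)) = 0 := by
    rw [← mul_assoc, hPF, zero_mul]
  have hGP : (proj (M₂ ⊓ (M₁ ⊓ M₂)ᗮ) * proj (M₁ ⊓ (M₁ ⊓ M₂)ᗮ))
      * proj (M₁ ⊓ M₂) = 0 := by
    rw [mul_assoc, hEP, mul_zero]
  have hGnP : ∀ k : ℕ, (proj (M₂ ⊓ (M₁ ⊓ M₂)ᗮ) * proj (M₁ ⊓ (M₁ ⊓ M₂)ᗮ)) ^ (k + 1)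
      * proj (M₁ ⊓ M₂) = 0 := by
    intro k
    rw [pow_succ, mul_assoc, hGP, mul_zero]
  induction n with
  | zero => rw [pow_one, pow_one]; exact hQ1
  | succ n ih =>
    rw [pow_succ, ih, hQ1, add_mul, mul_add, mul_add, proj_mul_self, hPG, hGnP n,
      ← pow_succ, add_zero, zero_add]

end Aux2

/-- If `M₁ + M₂` is closed, the alternating projections converge linearly with
rate `c(M₁,M₂)²`. -/
theorem alternating_projections_linear_convergence {𝕜 H : Type*} [RCLike 𝕜]
    [NormedAddCommGroup H] [InnerProductSpace 𝕜 H] [CompleteSpace H]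
    (M₁ M₂ : Submodule 𝕜 H)
    [CompleteSpace M₁] [CompleteSpace M₂] [CompleteSpace (M₁ ⊓ M₂ : Submodule 𝕜 H)]
    (hsum : IsClosed ((M₁ ⊔ M₂ : Submodule 𝕜 H) : Set H)) :
    fcos M₁ M₂ ^ 2 < 1 ∧
      ∃ c : ℝ, ∀ x : H, ∀ n : ℕ,
        ‖(((proj M₂).comp (proj M₁)) ^ n) x - proj (M₁ ⊓ M₂) x‖
          ≤ c * (fcos M₁ M₂ ^ 2) ^ n * ‖x‖ := by
  have hlt : fcos M₁ M₂ < 1 := fcos_lt_one M₁ M₂ hsum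
  have h0 : 0 ≤ fcos M₁ M₂ := fcos_nonneg M₁ M₂
  have hsq : fcos M₁ M₂ ^ 2 < 1 := pow_lt_one₀ h0 hlt (by norm_num)
  have hoc : IsClosed (((M₁ ⊓ M₂)ᗮ : Submodule 𝕜 H) : Set H) :=
    Submodule.isClosed_orthogonal _
  haveI : CompleteSpace (M₁ ⊓ (M₁ ⊓ M₂)ᗮ : Submodule 𝕜 H) :=
    submodule_completeSpace_of_isClosed
      (by rw [Submodule.coe_inf]; exact (submodule_isClosed_of_complete ‹_›).inter hoc)
  haveI : CompleteSpace (M₂ ⊓ (M₁ ⊓ M₂)ᗮ : Submodule 𝕜 H) :=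
    submodule_completeSpace_of_isClosed
      (by rw [Submodule.coe_inf]; exact (submodule_isClosed_of_complete ‹_›).inter hoc)
  refine ⟨hsq, max 1 (fcos M₁ M₂)⁻¹, fun x n => ?_⟩
  obtain _ | n := n
  · rw [pow_zero ((proj M₂).comp (proj M₁)), pow_zero (fcos M₁ M₂ ^ 2),
      ContinuousLinearMap.one_apply]
    have h1 : ‖x - proj (M₁ ⊓ M₂) x‖ ≤ ‖x‖ := by
      calc ‖x - proj (M₁ ⊓ M₂) x‖ = ‖proj (M₁ ⊓ M₂)ᗮ x‖ := by
            rw [show proj (M₁ ⊓ M₂)ᗮ x = (M₁ ⊓ M₂)ᗮ.starProjection x from rfl,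
              Submodule.starProjection_orthogonal_val x]
            rfl
        _ ≤ ‖x‖ := proj_norm_le _ x
    calc ‖x - proj (M₁ ⊓ M₂) x‖ ≤ ‖x‖ := h1
      _ ≤ max 1 (fcos M₁ M₂)⁻¹ * 1 * ‖x‖ := by
          have hm : (1 : ℝ) ≤ max 1 (fcos M₁ M₂)⁻¹ := le_max_left _ _
          nlinarith [norm_nonneg x]
  · have hid := proj_pow_identity M₁ M₂ n
    have happ : (((proj M₂).comp (proj M₁)) ^ (n + 1)) x - proj (M₁ ⊓ M₂) x
        = ((proj (M₂ ⊓ (M₁ ⊓ M₂)ᗮ) * proj (M₁ ⊓ (M₁ ⊓ M₂)ᗮ)) ^ (n + 1)) x := by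
      rw [show ((proj M₂).comp (proj M₁)) = proj M₂ * proj M₁ from rfl, hid,
        ContinuousLinearMap.add_apply, add_sub_cancel_left]
    rw [happ]
    have hb := sandwich_pow_norm (proj_isSelfAdjoint (M₁ ⊓ (M₁ ⊓ M₂)ᗮ))
      (proj_isSelfAdjoint (M₂ ⊓ (M₁ ⊓ M₂)ᗮ)) (proj_mul_self _) (proj_mul_self _) n x
    have hGle : ‖proj (M₂ ⊓ (M₁ ⊓ M₂)ᗮ) * proj (M₁ ⊓ (M₁ ⊓ M₂)ᗮ)‖ ≤ fcos M₁ M₂ :=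
      opnorm_le_fcos M₁ M₂
    have hpow : ‖proj (M₂ ⊓ (M₁ ⊓ M₂)ᗮ) * proj (M₁ ⊓ (M₁ ⊓ M₂)ᗮ)‖ ^ (2 * n + 1)
        ≤ fcos M₁ M₂ ^ (2 * n + 1) :=
      pow_le_pow_left₀ (norm_nonneg _) hGle _
    have hfinal : fcos M₁ M₂ ^ (2 * n + 1)
        ≤ max 1 (fcos M₁ M₂)⁻¹ * (fcos M₁ M₂ ^ 2) ^ (n + 1) := by
      rcases h0.eq_or_lt with h | h
      · rw [← h]
        simp
      · have heq : (fcos M₁ M₂)⁻¹ * (fcos M₁ M₂ ^ 2) ^ (n + 1)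
            = fcos M₁ M₂ ^ (2 * n + 1) := by
          rw [← pow_mul, show 2 * (n + 1) = (2 * n + 1) + 1 from by ring, pow_succ,
            mul_comm, mul_assoc, mul_inv_cancel₀ h.ne', mul_one]
        rw [← heq]
        exact mul_le_mul_of_nonneg_right (le_max_right _ _) (by positivity)
    calc ‖((proj (M₂ ⊓ (M₁ ⊓ M₂)ᗮ) * proj (M₁ ⊓ (M₁ ⊓ M₂)ᗮ)) ^ (n + 1)) x‖
        ≤ ‖proj (M₂ ⊓ (M₁ ⊓ M₂)ᗮ) * proj (M₁ ⊓ (M₁ ⊓ M₂)ᗮ)‖ ^ (2 * n + 1) * ‖x‖ := hb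
      _ ≤ fcos M₁ M₂ ^ (2 * n + 1) * ‖x‖ :=
          mul_le_mul_of_nonneg_right hpow (norm_nonneg x)
      _ ≤ max 1 (fcos M₁ M₂)⁻¹ * (fcos M₁ M₂ ^ 2) ^ (n + 1) * ‖x‖ :=
          mul_le_mul_of_nonneg_right hfinal (norm_nonneg x)
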